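/- Let V be a module over ℂ and φ : ℝ⁴ → End_ℂ(V) a (possibly interacting scalar) field. Let L₊↑ be the restricted Lorentz group, acting on ℝ⁴ by matrix-vector multiplication, and let U : L₊↑ → (End_ℂ(V))ˣ be a group homomorphism such that φ(Λ·x) = U(Λ) ∘ φ(x) ∘ U(Λ)⁻¹ for all Λ ∈ L₊↑ and x ∈ ℝ⁴. Suppose there is a map T : ℝ⁴ → ℝ⁴ → End_ℂ(V) such that: (i) T(x,y) = φ(x) ∘ φ(y) whenever x₀ > y₀; (ii) T(x,y) = φ(y) ∘ φ(x) whenever y₀ > x₀; (iii) T(Λ·x, Λ·y) = U(Λ) ∘ T(x,y) ∘ U(Λ)⁻¹ for all Λ ∈ L₊↑ and all x ≠ y. Then local commutativity holds: for all x, y ∈ ℝ⁴ with x − y spacelike (Q(x−y) < 0), φ(x) ∘ φ(y) = φ(y) ∘ φ(x). -/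

import Mathlib

/-- The Minkowski quadratic form on `ℝ⁴`, `Q(x) = x₀² − x₁² − x₂² − x₃²`. -/
def Qmink (x : Fin 4 → ℝ) : ℝ := x 0 ^ 2 - x 1 ^ 2 - x 2 ^ 2 - x 3 ^ 2

/-- The Minkowski metric matrix `G = diag(1, −1, −1, −1)`. -/
def minkMetric : Matrix (Fin 4) (Fin 4) ℝ := Matrix.diagonal ![1, -1, -1, -1]

/-- A matrix belongs to the restricted Lorentz group `L₊↑` if `Λᵀ G Λ = G`,
`det Λ = 1` and `Λ₀₀ ≥ 1`. -/
def IsRestrictedLorentz (Λ : Matrix (Fin 4) (Fin 4) ℝ) : Prop :=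
  Λ.transpose * minkMetric * Λ = minkMetric ∧ Λ.det = 1 ∧ 1 ≤ Λ 0 0

/-- A pure boost along the spatial direction `(n1,n2,n3)`. -/
def boostMat (γ b n1 n2 n3 : ℝ) : Matrix (Fin 4) (Fin 4) ℝ :=
  !![γ, -b*n1, -b*n2, -b*n3;
     -b*n1, 1+(γ-1)*n1^2, (γ-1)*n1*n2, (γ-1)*n1*n3;
     -b*n2, (γ-1)*n1*n2, 1+(γ-1)*n2^2, (γ-1)*n2*n3;
     -b*n3, (γ-1)*n1*n3, (γ-1)*n2*n3, 1+(γ-1)*n3^2]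

set_option maxHeartbeats 2000000 in
lemma boostMat_isRestrictedLorentz (γ b n1 n2 n3 : ℝ)
    (hγ : γ^2 = b^2 + 1) (hγ1 : 1 ≤ γ) (hn : n1^2 + n2^2 + n3^2 = 1) :
    IsRestrictedLorentz (boostMat γ b n1 n2 n3) := by
  have htr : (boostMat γ b n1 n2 n3).transpose = boostMat γ b n1 n2 n3 := by
    ext i j
    fin_cases i <;> fin_cases j <;> simp [boostMat, Matrix.transpose_apply] <;> ring
  have hG : minkMetric = !![1,0,0,0; 0,-1,0,0; 0,0,-1,0; 0,0,0,-1] := by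
    ext i j
    fin_cases i <;> fin_cases j <;> simp [minkMetric, Matrix.diagonal, Matrix.vecHead, Matrix.vecTail]
  refine ⟨?_, ?_, ?_⟩
  · rw [htr, hG]
    ext i j
    fin_cases i <;> fin_cases j <;>
      simp [boostMat, Matrix.mul_apply, Fin.sum_univ_four, Matrix.vecHead, Matrix.vecTail]
    · linear_combination (-b^2)*hn + hγ
    · linear_combination (-b*n1 + γ*b*n1)*hn
    · linear_combination (-b*n2 + γ*b*n2)*hn
    · linear_combination (-b*n3 + γ*b*n3)*hn
    · linear_combination (-b*n1 + γ*b*n1)*hn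
    · linear_combination (-2*n1^2 - b^2*n1^2 + 2*γ*n1^2)*hn + (-n1^2*n3^2 - n1^2*n2^2 - n1^4)*hγ
    · linear_combination (-2*n1*n2 - b^2*n1*n2 + 2*γ*n1*n2)*hn + (-n1*n2*n3^2 - n1*n2^3 - n1^3*n2)*hγ
    · linear_combination (-2*n1*n3 - b^2*n1*n3 + 2*γ*n1*n3)*hn + (-n1*n3^3 - n1*n2^2*n3 - n1^3*n3)*hγ
    · linear_combination (-b*n2 + γ*b*n2)*hn
    · linear_combination (-2*n1*n2 - b^2*n1*n2 + 2*γ*n1*n2)*hn + (-n1*n2*n3^2 - n1*n2^3 - n1^3*n2)*hγ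
    · linear_combination (-2*n2^2 - b^2*n2^2 + 2*γ*n2^2)*hn + (-n2^2*n3^2 - n2^4 - n1^2*n2^2)*hγ
    · linear_combination (-2*n2*n3 - b^2*n2*n3 + 2*γ*n2*n3)*hn + (-n2*n3^3 - n2^3*n3 - n1^2*n2*n3)*hγ
    · linear_combination (-b*n3 + γ*b*n3)*hn
    · linear_combination (-2*n1*n3 - b^2*n1*n3 + 2*γ*n1*n3)*hn + (-n1*n3^3 - n1*n2^2*n3 - n1^3*n3)*hγ
    · linear_combination (-2*n2*n3 - b^2*n2*n3 + 2*γ*n2*n3)*hn + (-n2*n3^3 - n2^3*n3 - n1^2*n2*n3)*hγ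
    · linear_combination (-2*n3^2 - b^2*n3^2 + 2*γ*n3^2)*hn + (-n3^4 - n2^2*n3^2 - n1^2*n3^2)*hγ
  · simp [boostMat, Matrix.det_succ_row_zero, Fin.sum_univ_succ, Matrix.vecHead,
      Matrix.vecTail, Matrix.submatrix_apply, Fin.succ_zero_eq_one, Fin.succAbove,
      Fin.castSucc, Fin.castAdd, Fin.castLE, Fin.succ]
    linear_combination (1 - γ)*hn + (n3^2 + n2^2 + n1^2)*hγ
  · simp [boostMat]; exact hγ1

set_option maxHeartbeats 2000000 in
theorem local_commutativity_of_lorentz_covariance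
    {V : Type*} [AddCommGroup V] [Module ℂ V]
    (φ : (Fin 4 → ℝ) → Module.End ℂ V)
    (U : Matrix (Fin 4) (Fin 4) ℝ → (Module.End ℂ V)ˣ)
    (hU1 : U 1 = 1)
    (hUmul : ∀ Λ₁ Λ₂ : Matrix (Fin 4) (Fin 4) ℝ,
      IsRestrictedLorentz Λ₁ → IsRestrictedLorentz Λ₂ → U (Λ₁ * Λ₂) = U Λ₁ * U Λ₂)
    (hφcov : ∀ Λ : Matrix (Fin 4) (Fin 4) ℝ, IsRestrictedLorentz Λ →
      ∀ x : Fin 4 → ℝ, φ (Λ.mulVec x) = ↑(U Λ) * φ x * ↑(U Λ)⁻¹)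
    (T : (Fin 4 → ℝ) → (Fin 4 → ℝ) → Module.End ℂ V)
    (hT₁ : ∀ x y : Fin 4 → ℝ, y 0 < x 0 → T x y = φ x * φ y)
    (hT₂ : ∀ x y : Fin 4 → ℝ, x 0 < y 0 → T x y = φ y * φ x)
    (hTcov : ∀ Λ : Matrix (Fin 4) (Fin 4) ℝ, IsRestrictedLorentz Λ →
      ∀ x y : Fin 4 → ℝ, x ≠ y →
        T (Λ.mulVec x) (Λ.mulVec y) = ↑(U Λ) * T x y * ↑(U Λ)⁻¹) :
    ∀ x y : Fin 4 → ℝ, Qmink (x - y) < 0 → φ x * φ y = φ y * φ x := by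
  -- cancellation of conjugation by a unit
  have hcancel : ∀ (u : (Module.End ℂ V)ˣ) (A B : Module.End ℂ V),
      (↑u * A * ↑u⁻¹ : Module.End ℂ V) = ↑u * B * ↑u⁻¹ → A = B := by
    intro u A B h
    have h2 := congrArg (fun C => (↑u⁻¹ : Module.End ℂ V) * C * ↑u) h
    simpa [mul_assoc, Units.inv_mul_cancel_left, Units.inv_mul, mul_one] using h2
  -- key: covariance turns time-ordering in any frame into a statement about T x y
  have hkey₁ : ∀ (Λ : Matrix (Fin 4) (Fin 4) ℝ), IsRestrictedLorentz Λ →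
      ∀ x y : Fin 4 → ℝ, x ≠ y → (Λ.mulVec y) 0 < (Λ.mulVec x) 0 →
      T x y = φ x * φ y := by
    intro Λ hΛ x y hxy hlt
    have h1 := hT₁ (Λ.mulVec x) (Λ.mulVec y) hlt
    rw [hTcov Λ hΛ x y hxy, hφcov Λ hΛ x, hφcov Λ hΛ y] at h1
    refine hcancel (U Λ) _ _ ?_
    rw [h1]; simp only [mul_assoc, Units.inv_mul_cancel_left]
  have hkey₂ : ∀ (Λ : Matrix (Fin 4) (Fin 4) ℝ), IsRestrictedLorentz Λ →
      ∀ x y : Fin 4 → ℝ, x ≠ y → (Λ.mulVec x) 0 < (Λ.mulVec y) 0 →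
      T x y = φ y * φ x := by
    intro Λ hΛ x y hxy hlt
    have h1 := hT₂ (Λ.mulVec x) (Λ.mulVec y) hlt
    rw [hTcov Λ hΛ x y hxy, hφcov Λ hΛ x, hφcov Λ hΛ y] at h1
    refine hcancel (U Λ) _ _ ?_
    rw [h1]; simp only [mul_assoc, Units.inv_mul_cancel_left]
  intro x y hQ
  set z : Fin 4 → ℝ := x - y with hzdef
  have hz : ∀ i, z i = x i - y i := fun i => rfl
  have hQ' : (z 0)^2 < (z 1)^2 + (z 2)^2 + (z 3)^2 := by
    have : Qmink z < 0 := hQ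
    unfold Qmink at this; linarith
  have hxy : x ≠ y := by
    intro h
    have : z 0 = 0 ∧ z 1 = 0 ∧ z 2 = 0 ∧ z 3 = 0 := by
      subst h; simp [hz]
    rcases this with ⟨h0, h1, h2, h3⟩
    rw [h0, h1, h2, h3] at hQ'; nlinarith
  -- spatial length
  set s : ℝ := Real.sqrt ((z 1)^2 + (z 2)^2 + (z 3)^2) with hsdef
  have hs_sq : s^2 = (z 1)^2 + (z 2)^2 + (z 3)^2 :=
    Real.sq_sqrt (by positivity)
  have hs_pos : 0 < s := Real.sqrt_pos.2 (by nlinarith [sq_nonneg (z 0)])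
  have hz0s : (z 0)^2 < s^2 := by rw [hs_sq]; exact hQ'
  -- direction
  set n1 : ℝ := z 1 / s
  set n2 : ℝ := z 2 / s
  set n3 : ℝ := z 3 / s
  have hn : n1^2 + n2^2 + n3^2 = 1 := by
    have hs0 : s ≠ 0 := ne_of_gt hs_pos
    have : (z 1)^2/s^2 + (z 2)^2/s^2 + (z 3)^2/s^2 = 1 := by
      field_simp
      linarith [hs_sq]
    simpa [n1, n2, n3, div_pow] using this
  -- boost parameter
  set d : ℝ := s^2 - (z 0)^2 with hddef
  have hd_pos : 0 < d := by simp [hddef]; linarith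
  set b : ℝ := (|z 0| + 1) / Real.sqrt d with hbdef
  have hb_pos : 0 < b := by
    apply div_pos (by positivity) (Real.sqrt_pos.2 hd_pos)
  have hb_sq : b^2 * d = (|z 0| + 1)^2 := by
    rw [hbdef, div_pow, Real.sq_sqrt hd_pos.le]
    field_simp
  set γ : ℝ := Real.sqrt (b^2 + 1) with hγdef
  have hγ_sq : γ^2 = b^2 + 1 := Real.sq_sqrt (by positivity)
  have hγ0 : 0 ≤ γ := Real.sqrt_nonneg _
  have hγ1 : 1 ≤ γ := by nlinarith [sq_nonneg b]
  -- key inequality : (b*s)^2 > (γ * z 0)^2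
  have hineq : (γ * z 0)^2 < (b*s)^2 := by
    have e1 : (b*s)^2 - (γ * z 0)^2 = b^2*d - (z 0)^2 := by
      rw [hddef]; linear_combination (-(z 0)^2) * hγ_sq
    have h2 : (z 0)^2 < (|z 0| + 1)^2 := by
      nlinarith [sq_abs (z 0), abs_nonneg (z 0)]
    rw [hb_sq] at e1
    linarith
  have hbs_pos : 0 < b * s := mul_pos hb_pos hs_pos
  have hlt₁ : γ * z 0 - b * s < 0 := by nlinarith [sq_nonneg (γ * z 0 + b * s)]
  have hlt₂ : 0 < γ * z 0 + b * s := by nlinarith [sq_nonneg (γ * z 0 - b * s)]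
  -- the two boosts
  have hΛp := boostMat_isRestrictedLorentz γ b n1 n2 n3 hγ_sq hγ1 hn
  have hΛm := boostMat_isRestrictedLorentz γ (-b) n1 n2 n3 (by rw [hγ_sq]; ring) hγ1 hn
  -- time components after boosting
  have hdot : n1 * z 1 + n2 * z 2 + n3 * z 3 = s := by
    have hs0 : s ≠ 0 := ne_of_gt hs_pos
    have : ((z 1)^2 + (z 2)^2 + (z 3)^2)/s = s := by
      rw [← hs_sq]; field_simp
    calc n1 * z 1 + n2 * z 2 + n3 * z 3
        = ((z 1)^2 + (z 2)^2 + (z 3)^2)/s := by simp only [n1, n2, n3]; ring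
      _ = s := this
  have htime : ∀ c : ℝ, ((boostMat γ c n1 n2 n3).mulVec x) 0
      - ((boostMat γ c n1 n2 n3).mulVec y) 0 = γ * z 0 - c * s := by
    intro c
    simp [Matrix.mulVec, dotProduct, Fin.sum_univ_four, boostMat,
      Matrix.vecHead, Matrix.vecTail]
    have h0 := hz 0; have h1 := hz 1; have h2 := hz 2; have h3 := hz 3
    have hs0 : s ≠ 0 := ne_of_gt hs_pos
    have hss : s⁻¹ * s^2 = s := by field_simp
    linear_combination (-γ) * h0 + c * s⁻¹ * z 1 * h1 + c * s⁻¹ * z 2 * h2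
      + c * s⁻¹ * z 3 * h3 + c * s⁻¹ * hs_sq - c * hss
  have e1 : T x y = φ y * φ x := by
    refine hkey₂ (boostMat γ b n1 n2 n3) hΛp x y hxy ?_
    have := htime b
    linarith
  have e2 : T x y = φ x * φ y := by
    refine hkey₁ (boostMat γ (-b) n1 n2 n3) hΛm x y hxy ?_
    have := htime (-b)
    have h' : γ * z 0 - (-b) * s = γ * z 0 + b * s := by ring
    rw [h'] at this
    linarith
  rw [← e2, e1]
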